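/- arXiv:1812.02277 — 5 statements merged into one kernel-verified Lean document; each statement's English description precedes it below -/
import Mathlib

section
/- Let X be a free ℤ-module of finite rank, B : X × X → ℚ a symmetric ℤ-bilinear form, and α_1, …, α_n ∈ X a finite list of elements such that: (i) for every x ∈ X, if B(α_j, x) = 0 for all j = 1, …, n then x = 0; and (ii) for each j = 1, …, n the set S_j = { x ∈ X : B(α_i, x) = 0 for all i < j, and B(α_j, x) > 0 } is nonempty. Then the set of dominant elements X⁺ = { x ∈ X : B(α_j, x) ≥ 0 for all j = 1, …, n } generates X as a ℤ-module (i.e. every element of X is a ℤ-linear combination of dominant elements). -/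
/-- Dominant elements span the lattice: if `X` is a finite-rank free `ℤ`-module,
`B` a symmetric `ℤ`-bilinear `ℚ`-valued form, and `α 0, …, α (n-1)` elements such
that (i) only `0` pairs to zero with every `α j`, and (ii) for each `j` there is an
element orthogonal to all earlier `α i` and pairing positively with `α j`, then the
set of dominant elements `{x | ∀ j, 0 ≤ B (α j) x}` generates `X` over `ℤ`. -/
theorem dominant_weights_span
    (X : Type*) [AddCommGroup X] [Module ℤ X] [Module.Free ℤ X] [Module.Finite ℤ X]
    (n : ℕ) (B : X →ₗ[ℤ] X →ₗ[ℤ] ℚ)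
    (hsymm : ∀ x y : X, B x y = B y x)
    (α : Fin n → X)
    (hnondeg : ∀ x : X, (∀ j : Fin n, B (α j) x = 0) → x = 0)
    (hS : ∀ j : Fin n, ∃ x : X, (∀ i : Fin n, i < j → B (α i) x = 0) ∧ 0 < B (α j) x) :
    Submodule.span ℤ {x : X | ∀ j : Fin n, 0 ≤ B (α j) x} = ⊤ := by
  classical
  -- Step 1: for each `j` there is a *dominant* element orthogonal to earlier `α i`
  -- and pairing positively with `α j`.
  have keyA : ∀ d : ℕ, ∀ j : Fin n, n - (j : ℕ) ≤ d →
      ∃ z : X, (∀ i : Fin n, i < j → B (α i) z = 0) ∧ 0 < B (α j) z ∧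
        ∀ i : Fin n, 0 ≤ B (α i) z := by
    intro d
    induction d with
    | zero => intro j hj; exact absurd hj (by have := j.isLt; omega)
    | succ d ih =>
      intro j hj
      obtain ⟨x, hx0, hxpos⟩ := hS j
      have inner : ∀ m : ℕ, ∃ w : X,
          (∀ i : Fin n, i ≤ j → B (α i) w = B (α i) x) ∧
          (∀ i : Fin n, (i : ℕ) < m → j < i → 0 ≤ B (α i) w) := by
        intro m
        induction m with
        | zero => exact ⟨x, fun i _ => rfl, fun i hi _ => absurd hi (by omega)⟩
        | succ m ihm =>
          obtain ⟨w, hw1, hw2⟩ := ihm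
          by_cases hm : m < n
          · set i : Fin n := ⟨m, hm⟩ with hidef
            by_cases hji : j < i
            · obtain ⟨z, hz1, hz2, _⟩ := ih i (by
                have h1 : (j : ℕ) < (i : ℕ) := hji
                omega)
              obtain ⟨c, hc⟩ := exists_nat_ge ((-(B (α i) w)) / (B (α i) z))
              have key_e : ∀ i' : Fin n,
                  B (α i') (w + (c : ℤ) • z) = B (α i') w + (c : ℚ) * B (α i') z := by
                intro i'
                simp [map_add, map_smul, zsmul_eq_mul]
              refine ⟨w + (c : ℤ) • z, ?_, ?_⟩
              · intro i' hi'
                have hz0 : B (α i') z = 0 := hz1 i' (lt_of_le_of_lt hi' hji)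
                rw [key_e, hz0, mul_zero, add_zero, hw1 i' hi']
              · intro i' hi' hji'
                rcases Nat.lt_succ_iff_lt_or_eq.mp hi' with h | h
                · have hz0 : B (α i') z = 0 := hz1 i' (by
                    have : (i' : ℕ) < (i : ℕ) := h
                    exact this)
                  rw [key_e, hz0, mul_zero, add_zero]
                  exact hw2 i' h hji'
                · have hii : i' = i := by apply Fin.ext; simpa using h
                  rw [hii, key_e]
                  have hc' : (-(B (α i) w)) ≤ (c : ℚ) * B (α i) z :=
                    (div_le_iff₀ hz2).mp hc
                  linarith
            · refine ⟨w, hw1, ?_⟩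
              intro i' hi' hji'
              rcases Nat.lt_succ_iff_lt_or_eq.mp hi' with h | h
              · exact hw2 i' h hji'
              · exact absurd (show j < i by rw [← show i' = i from by apply Fin.ext; simpa using h]; exact hji') hji
          · exact ⟨w, hw1, fun i' hi' hji' => hw2 i' (by have := i'.isLt; omega) hji'⟩
      obtain ⟨w, hw1, hw2⟩ := inner n
      refine ⟨w, fun i hi => by rw [hw1 i hi.le]; exact hx0 i hi, ?_, ?_⟩
      · rw [hw1 j le_rfl]; exact hxpos
      · intro i
        rcases lt_trichotomy i j with h | h | h
        · rw [hw1 i h.le, hx0 i h]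
        · subst h; rw [hw1 i le_rfl]; exact hxpos.le
        · exact hw2 i i.isLt h
  have key : ∀ j : Fin n, ∃ z : X, (∀ i : Fin n, i < j → B (α i) z = 0) ∧
      0 < B (α j) z ∧ ∀ i : Fin n, 0 ≤ B (α i) z :=
    fun j => keyA n j (by omega)
  -- Step 2: every element is a difference of elements whose pairings are dominant.
  set D : Set X := {x : X | ∀ j : Fin n, 0 ≤ B (α j) x} with hD
  rw [Submodule.eq_top_iff']
  intro x
  have inner : ∀ m : ℕ, ∃ y : X, y ∈ Submodule.span ℤ D ∧
      ∀ i : Fin n, (i : ℕ) < m → 0 ≤ B (α i) (x + y) := by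
    intro m
    induction m with
    | zero => exact ⟨0, zero_mem _, fun i hi => absurd hi (by omega)⟩
    | succ m ihm =>
      obtain ⟨y, hy, hy2⟩ := ihm
      by_cases hm : m < n
      · set i : Fin n := ⟨m, hm⟩ with hidef
        obtain ⟨z, hz1, hz2, hz3⟩ := key i
        obtain ⟨c, hc⟩ := exists_nat_ge ((-(B (α i) (x + y))) / (B (α i) z))
        have key_e : ∀ i' : Fin n,
            B (α i') (x + (y + (c : ℤ) • z)) =
              B (α i') (x + y) + (c : ℚ) * B (α i') z := by
          intro i'
          simp [map_add, map_smul, zsmul_eq_mul]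
          ring
        refine ⟨y + (c : ℤ) • z,
          add_mem hy ((Submodule.span ℤ D).toAddSubgroup.zsmul_mem (Submodule.subset_span (show z ∈ D from hz3)) (c : ℤ)), ?_⟩
        intro i' hi'
        rcases Nat.lt_succ_iff_lt_or_eq.mp hi' with h | h
        · have hz0 : B (α i') z = 0 := hz1 i' (by exact h)
          rw [key_e, hz0, mul_zero, add_zero]
          exact hy2 i' h
        · have hii : i' = i := by apply Fin.ext; simpa using h
          rw [hii, key_e]
          have hc' : (-(B (α i) (x + y))) ≤ (c : ℚ) * B (α i) z :=
            (div_le_iff₀ hz2).mp hc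
          linarith
      · exact ⟨y, hy, fun i' hi' => hy2 i' (by have := i'.isLt; omega)⟩
  obtain ⟨y, hy, hy2⟩ := inner n
  have hxy : x + y ∈ D := fun j => hy2 j j.isLt
  have : x = (x + y) - y := by abel
  rw [this]
  exact sub_mem (Submodule.subset_span hxy) hy
end

section
/- Let X be an abelian group, M ⊆ X a subgroup, and β : X × X → ℂˣ a map multiplicative in each argument (ℤ-bilinear into the multiplicative group of ℂ) such that β(x, x′) = 1 for all x, x′ ∈ M. Then there exists a balancing function ω : X × X → ℂˣ, i.e. a map satisfying: (a) ω(a + a′, b) = ω(a, b)·ω(a′, b) for all a, a′, b ∈ X; (b) ω(a, b + x) = β(a, x)·ω(a, b) for all a, b ∈ X and x ∈ M; (c) ω(x, b) = 1 for all x ∈ M and b ∈ X. -/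
/-- Every strongly admissible lattice admits a balancing function: given an abelian
group `X`, a subgroup `M`, and a bilinear map `β : X × X → ℂˣ` which is trivial on
`M × M`, there exists `ω : X × X → ℂˣ` which is (a) linear in its first argument,
(b) `M`-semilinear (via `β`) in its second argument, and (c) trivial on `M × X`. -/
theorem exists_balancing_function
    (X : Type*) [AddCommGroup X] (M : AddSubgroup X)
    (β : X → X → ℂˣ)
    (hβ1 : ∀ a a' b : X, β (a + a') b = β a b * β a' b)
    (hβ2 : ∀ a b b' : X, β a (b + b') = β a b * β a b')
    (hβM : ∀ x ∈ M, ∀ x' ∈ M, β x x' = 1) :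
    ∃ ω : X → X → ℂˣ,
      (∀ a a' b : X, ω (a + a') b = ω a b * ω a' b) ∧
      (∀ a b : X, ∀ x ∈ M, ω a (b + x) = β a x * ω a b) ∧
      (∀ x ∈ M, ∀ b : X, ω x b = 1) := by
  set s : X → X := fun b => ((QuotientAddGroup.mk b : X ⧸ M)).out with hs
  have hmem : ∀ b : X, b - s b ∈ M := by
    intro b
    have h1 : (QuotientAddGroup.mk (b - s b) : X ⧸ M) = 0 := by
      rw [QuotientAddGroup.mk_sub,
        show s b = ((QuotientAddGroup.mk b : X ⧸ M)).out from rfl,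
        QuotientAddGroup.out_eq', sub_self]
    exact (QuotientAddGroup.eq_zero_iff _).mp h1
  have hsadd : ∀ b : X, ∀ x ∈ M, s (b + x) = s b := by
    intro b x hx
    have : (QuotientAddGroup.mk (b + x) : X ⧸ M) = QuotientAddGroup.mk b := by
      rw [QuotientAddGroup.mk_add, (QuotientAddGroup.eq_zero_iff x).mpr hx, add_zero]
    simp [hs, this]
  refine ⟨fun a b => β a (b - s b), ?_, ?_, ?_⟩
  · intro a a' b; exact hβ1 a a' _
  · intro a b x hx
    simp only []
    rw [hsadd b x hx]
    have : b + x - s b = x + (b - s b) := by abel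
    rw [this, hβ2]
  · intro x hx b
    exact hβM x hx _ (hmem b)
end

section
/- Let ω be a balancing function for (X, M, β), and define b : X → ℂˣ by b(a) = ω(a, a)⁻¹ · ω(a, −a)⁻¹. Then b is constant on M-cosets: for all a ∈ X and x ∈ M, b(a + x) = b(a). In particular b descends to a function on X/M. -/
/-- The function `b(a) = ω(a,a)⁻¹·ω(a,−a)⁻¹` built from a balancing function `ω`
for `(X, M, β)` is constant on `M`-cosets, hence descends to a function on `X/M`. -/
theorem antipode_element_M_invariant
    (X : Type*) [AddCommGroup X] (M : AddSubgroup X)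
    (β ω : X → X → ℂˣ)
    (hβ1 : ∀ a a' b : X, β (a + a') b = β a b * β a' b)
    (hβ2 : ∀ a b b' : X, β a (b + b') = β a b * β a b')
    (ha : ∀ a a' b : X, ω (a + a') b = ω a b * ω a' b)
    (hb : ∀ a b : X, ∀ x ∈ M, ω a (b + x) = β a x * ω a b)
    (hc : ∀ x ∈ M, ∀ b : X, ω x b = 1) :
    ∀ a : X, ∀ x ∈ M,
      (ω (a + x) (a + x))⁻¹ * (ω (a + x) (-(a + x)))⁻¹
        = (ω a a)⁻¹ * (ω a (-a))⁻¹ := by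
  intro a x hx
  have hβ0 : β a 0 = 1 := by
    have := hβ2 a 0 0
    rw [add_zero] at this
    exact (mul_eq_left.mp this.symm)
  have h1 : ω (a + x) (a + x) = β a x * ω a a := by
    rw [ha, hc x hx, mul_one, hb a a x hx]
  have h2 : ω (a + x) (-(a + x)) = β a (-x) * ω a (-a) := by
    have : -(a + x) = -a + -x := by abel
    rw [ha, hc x hx, mul_one, this, hb a (-a) (-x) (neg_mem hx)]
  rw [h1, h2, mul_inv, mul_inv]
  have hinv : (β a x)⁻¹ * (β a (-x))⁻¹ = 1 := by
    rw [← mul_inv, ← hβ2, add_neg_cancel, hβ0, inv_one]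
  calc (β a x)⁻¹ * (ω a a)⁻¹ * ((β a (-x))⁻¹ * (ω a (-a))⁻¹)
      = (β a x)⁻¹ * (β a (-x))⁻¹ * ((ω a a)⁻¹ * (ω a (-a))⁻¹) := mul_mul_mul_comm _ _ _ _
    _ = (ω a a)⁻¹ * (ω a (-a))⁻¹ := by rw [hinv, one_mul]
end

section
/- Let ω be a balancing function for (X, M, β), and assume additionally that β is symmetric (β(a,b) = β(b,a) for all a, b ∈ X) and that β(a, x)² = 1 for all a ∈ X and x ∈ M. Then for each fixed γ ∈ X, both functions g, h : X → ℂˣ defined by g(λ) = β(λ, γ) · ω(λ, λ) · ω(λ − γ, λ − γ) and h(λ) = β(λ, γ)⁻¹ · ω(λ, λ) · ω(λ + γ, λ + γ)⁻¹ are constant on M-cosets: g(λ + x) = g(λ) and h(λ + x) = h(λ) for all λ ∈ X and x ∈ M. -/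
/-- If `ω` is a balancing function for `(X, M, β)` with `β` symmetric and
`β(a,x)² = 1` for all `a ∈ X`, `x ∈ M`, then for each fixed `γ ∈ X` the antipode
coefficient functions `g(λ) = β(λ,γ)·ω(λ,λ)·ω(λ−γ,λ−γ)` and
`h(λ) = β(λ,γ)⁻¹·ω(λ,λ)·ω(λ+γ,λ+γ)⁻¹` are constant on `M`-cosets. -/
theorem antipode_coefficients_M_invariant
    (X : Type*) [AddCommGroup X] (M : AddSubgroup X)
    (β ω : X → X → ℂˣ)
    (hβ1 : ∀ a a' b : X, β (a + a') b = β a b * β a' b)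
    (hβ2 : ∀ a b b' : X, β a (b + b') = β a b * β a b')
    (hβsymm : ∀ a b : X, β a b = β b a)
    (hβsq : ∀ a : X, ∀ x ∈ M, (β a x) ^ 2 = 1)
    (ha : ∀ a a' b : X, ω (a + a') b = ω a b * ω a' b)
    (hb : ∀ a b : X, ∀ x ∈ M, ω a (b + x) = β a x * ω a b)
    (hc : ∀ x ∈ M, ∀ b : X, ω x b = 1) :
    ∀ γ lam : X, ∀ x ∈ M,
      (β (lam + x) γ * ω (lam + x) (lam + x) * ω (lam + x - γ) (lam + x - γ)
          = β lam γ * ω lam lam * ω (lam - γ) (lam - γ)) ∧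
      ((β (lam + x) γ)⁻¹ * ω (lam + x) (lam + x) * (ω (lam + x + γ) (lam + x + γ))⁻¹
          = (β lam γ)⁻¹ * ω lam lam * (ω (lam + γ) (lam + γ))⁻¹) := by
  intro γ lam x hx
  -- ω is translation-covariant: ω (a+x) (a+x) = β a x * ω a a
  have key : ∀ a : X, ω (a + x) (a + x) = β a x * ω a a := by
    intro a
    rw [ha a x (a + x), hc x hx, mul_one, hb a a x hx]
  -- β (a - γ) x = β a x * (β γ x)⁻¹
  have hβsub : ∀ a : X, β (a - γ) x = β a x * (β γ x)⁻¹ := by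
    intro a
    have := hβ1 (a - γ) γ x
    rw [sub_add_cancel] at this
    rw [this]
    group
  have hβadd : ∀ a : X, β (a + γ) x = β a x * β γ x := fun a => hβ1 a γ x
  have hsq : (β lam x : ℂ) ^ 2 = 1 := by
    simpa using congrArg Units.val (hβsq lam x hx)
  constructor
  · have e1 : lam + x - γ = (lam - γ) + x := by abel
    rw [e1, key, key, hβ1 lam x γ, hβsub lam]
    apply Units.ext
    push_cast
    have h1 : (β γ x : ℂ) ≠ 0 := Units.ne_zero _
    field_simp
    rw [hβsymm x γ]
    push_cast
    linear_combination (β γ x : ℂ) * hsq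
  · have e1 : lam + x + γ = (lam + γ) + x := by abel
    rw [e1, key, key, hβ1 lam x γ, hβadd lam]
    apply Units.ext
    push_cast
    have h1 : (β γ x : ℂ) ≠ 0 := Units.ne_zero _
    have h2 : (β lam x : ℂ) ≠ 0 := Units.ne_zero _
    have h3 : (β x γ : ℂ) ≠ 0 := Units.ne_zero _
    have h4 : (β lam γ : ℂ) ≠ 0 := Units.ne_zero _
    have h5 : (ω (lam + γ) (lam + γ) : ℂ) ≠ 0 := Units.ne_zero _
    have hsq' : (β γ x : ℂ) ^ 2 = 1 := by
      simpa using congrArg Units.val (hβsq γ x hx)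
    have hsymm : (β x γ : ℂ) = (β γ x : ℂ) := by rw [hβsymm x γ]
    field_simp
    linear_combination (-1 : ℂ) * ((β γ x : ℂ) * hsymm + hsq')
end

section
/- Let l ≥ 1 be an integer and define M = { m ∈ ℤ : for all n ∈ ℤ, l divides 2·m·n } (= { m : l ∣ 2m }). Then the following are equivalent: (i) for all m, m′ ∈ M, 2l divides 2·m·m′; (ii) for all m ∈ M, 2l divides 2·m²; (iii) l is odd or 4 divides l. Consequently the root lattice of PSL₂, with Killing form (mα, nα) = 2mn on X = ℤα, is strongly admissible at a root of unity q of order 2l exactly when 4 ∤ 2l or 8 ∣ 2l, and is inadmissible otherwise. -/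
private lemma psl2_odd_dvd (l m : ℤ) (hodd : Odd l) (hm : l ∣ 2 * m) : l ∣ m := by
  obtain ⟨k, hk⟩ := hodd
  obtain ⟨s, hs⟩ := hm
  exact ⟨(k + 1) * s - m, by linear_combination (k + 1) * hs + m * hk⟩

private lemma psl2_strong (l : ℤ) (h : Odd l ∨ 4 ∣ l) :
    ∀ m : ℤ, l ∣ 2 * m → ∀ m' : ℤ, l ∣ 2 * m' → (2 * l) ∣ 2 * (m * m') := by
  rcases h with hodd | ⟨v, hv⟩
  · intro m hm m' hm'
    obtain ⟨t, ht⟩ := psl2_odd_dvd l m hodd hm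
    exact ⟨t * m', by rw [ht]; ring⟩
  · intro m hm m' hm'
    obtain ⟨s, hs⟩ := hm
    obtain ⟨s', hs'⟩ := hm'
    have h1 : m = 2 * v * s := by
      have : (2 : ℤ) * m = 2 * (2 * v * s) := by rw [hs, hv]; ring
      exact mul_left_cancel₀ two_ne_zero this
    have h2 : m' = 2 * v * s' := by
      have : (2 : ℤ) * m' = 2 * (2 * v * s') := by rw [hs', hv]; ring
      exact mul_left_cancel₀ two_ne_zero this
    exact ⟨v * s * s', by rw [h1, h2, hv]; ring⟩

private lemma psl2_sq (l : ℤ) (hl : 1 ≤ l) :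
    (∀ m : ℤ, l ∣ 2 * m → (2 * l) ∣ 2 * (m * m)) ↔ (Odd l ∨ 4 ∣ l) := by
  constructor
  · intro h
    by_contra hc
    push_neg at hc
    obtain ⟨hno, h4⟩ := hc
    rw [Int.not_odd_iff_even] at hno
    obtain ⟨u, hu⟩ := hno
    have hl2 : l = 2 * u := by omega
    have hu1 : 1 ≤ u := by omega
    obtain ⟨c, hc2⟩ := h u (by rw [hl2])
    have h2 : u * u = u * (2 * c) := by
      have : (2 : ℤ) * (u * u) = 2 * (u * (2 * c)) := by rw [hc2, hl2]; ring
      exact mul_left_cancel₀ two_ne_zero this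
    have hu0 : u ≠ 0 := by omega
    have : u = 2 * c := mul_left_cancel₀ hu0 h2
    exact h4 ⟨c, by omega⟩
  · intro h m hm
    exact psl2_strong l h m hm m hm

/-- (Strong) admissibility for `PSL₂`: with `M = {m : ℤ | ∀ n, l ∣ 2mn} = {m | l ∣ 2m}`
(the sublattice `X^M` of the root lattice `X = ℤα` of `PSL₂`, with `(mα, nα) = 2mn`),
the conditions (i) `2l ∣ 2mm'` for all `m, m' ∈ M` (strong admissibility), (ii)
`2l ∣ 2m²` for all `m ∈ M` (admissibility), and (iii) `l` odd or `4 ∣ l` are all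
equivalent; i.e. `PSL₂` is strongly admissible at `q` of order `2l` exactly when
`4 ∤ 2l` or `8 ∣ 2l`, and inadmissible otherwise. -/
theorem psl2_admissibility (l : ℤ) (hl : 1 ≤ l) :
    ({m : ℤ | ∀ n : ℤ, l ∣ 2 * m * n} = {m : ℤ | l ∣ 2 * m}) ∧
    ((∀ m ∈ {m : ℤ | ∀ n : ℤ, l ∣ 2 * m * n},
        ∀ m' ∈ {m : ℤ | ∀ n : ℤ, l ∣ 2 * m * n}, (2 * l) ∣ 2 * (m * m'))
      ↔ (∀ m ∈ {m : ℤ | ∀ n : ℤ, l ∣ 2 * m * n}, (2 * l) ∣ 2 * (m * m))) ∧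
    ((∀ m ∈ {m : ℤ | ∀ n : ℤ, l ∣ 2 * m * n}, (2 * l) ∣ 2 * (m * m))
      ↔ (Odd l ∨ 4 ∣ l)) ∧
    ((∀ m ∈ {m : ℤ | ∀ n : ℤ, l ∣ 2 * m * n},
        ∀ m' ∈ {m : ℤ | ∀ n : ℤ, l ∣ 2 * m * n}, (2 * l) ∣ 2 * (m * m'))
      ↔ (¬ (4 ∣ 2 * l) ∨ 8 ∣ 2 * l)) := by
  have hset : {m : ℤ | ∀ n : ℤ, l ∣ 2 * m * n} = {m : ℤ | l ∣ 2 * m} := by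
    ext m
    simp only [Set.mem_setOf_eq]
    constructor
    · intro h
      simpa using h 1
    · intro h n
      exact (h.mul_right n)
  rw [hset]
  simp only [Set.mem_setOf_eq]
  have hsq := psl2_sq l hl
  have hstrongiff : (∀ m : ℤ, l ∣ 2 * m → ∀ m' : ℤ, l ∣ 2 * m' → (2 * l) ∣ 2 * (m * m'))
      ↔ (Odd l ∨ 4 ∣ l) := by
    constructor
    · intro h
      exact hsq.mp (fun m hm => h m hm m hm)
    · exact psl2_strong l
  refine ⟨trivial, ?_, hsq, ?_⟩
  · rw [hstrongiff, hsq]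
  · rw [hstrongiff]
    constructor <;> intro h <;> [skip; skip] <;>
      · rcases h with h | h
        · left
          rw [Int.odd_iff] at *
          omega
        · right
          omega
end
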